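/- Let ω : (0,∞) → (0,∞) be nondecreasing with μ(s) = ω(s)/s decreasing, μ(s) → ∞ as s → 0, and ω(s) → 0 as s → 0, and suppose limsup_j μ(2^{-j+1})/μ(2^{-j}) < 1. Define τ_m = c·r_m·(μ(r_m) - μ(r_{m-1})) with r_m = 2^{-m} and a fixed constant c > 0. Then τ_m → 0 as m → ∞, while if ∫₀¹ ω(s)/s ds = ∞ the series ∑_m τ_m diverges. -/

import Mathlib

open MeasureTheory Real Filter

theorem stmt17 (ω : ℝ → ℝ) (hωpos : ∀ s > (0:ℝ), 0 < ω s)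
    (hmono : MonotoneOn ω (Set.Ioi 0))
    (hμdec : StrictAntiOn (fun s => ω s / s) (Set.Ioi 0))
    (hμinf : Tendsto (fun s => ω s / s) (nhdsWithin 0 (Set.Ioi 0)) atTop)
    (hω0 : Tendsto ω (nhdsWithin 0 (Set.Ioi 0)) (nhds 0))
    (hlimsup : limsup (fun j : ℕ => (ω ((2:ℝ)^(-(j:ℝ)+1)) / (2:ℝ)^(-(j:ℝ)+1)) /
        (ω ((2:ℝ)^(-(j:ℝ))) / (2:ℝ)^(-(j:ℝ)))) atTop < 1)
    (c : ℝ) (hc : 0 < c)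
    (τ : ℕ → ℝ)
    (hτ : ∀ m : ℕ, τ m = c * (2:ℝ)^(-(m:ℝ)) *
      (ω ((2:ℝ)^(-(m:ℝ))) / (2:ℝ)^(-(m:ℝ)) -
        ω ((2:ℝ)^(-(m:ℝ)+1)) / (2:ℝ)^(-(m:ℝ)+1))) :
    Tendsto τ atTop (nhds 0) ∧
      (¬ IntegrableOn (fun s => ω s / s) (Set.Ioc (0:ℝ) 1) → ¬ Summable τ) := by
  set q : ℕ → ℝ := fun m => (1/2 : ℝ)^m with hqdef
  have hq_pos : ∀ m, 0 < q m := fun m => pow_pos (by norm_num) m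
  have hq_eq : ∀ m : ℕ, (2:ℝ)^(-(m:ℝ)) = q m := by
    intro m
    rw [rpow_neg (by norm_num : (0:ℝ) ≤ 2), rpow_natCast]
    simp [hqdef, inv_pow]
  have hq2_eq : ∀ m : ℕ, (2:ℝ)^(-(m:ℝ)+1) = 2 * q m := by
    intro m
    rw [rpow_add (by norm_num : (0:ℝ) < 2), rpow_one, hq_eq, mul_comm]
  have hq_succ : ∀ m : ℕ, 2 * q (m+1) = q m := by
    intro m; simp only [hqdef, pow_succ]; ring
  have hτ' : ∀ m, τ m = c * (ω (q m) - ω (2 * q m) / 2) := by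
    intro m
    rw [hτ m, hq_eq, hq2_eq]
    have h0 := (hq_pos m).ne'
    field_simp
  have key : ∀ m, ω (2 * q m) / 2 < ω (q m) := by
    intro m
    have h2q : (0:ℝ) < 2 * q m := by linarith [hq_pos m]
    have hmem1 : q m ∈ Set.Ioi (0:ℝ) := Set.mem_Ioi.mpr (hq_pos m)
    have hmem2 : 2 * q m ∈ Set.Ioi (0:ℝ) := Set.mem_Ioi.mpr h2q
    have h := hμdec hmem1 hmem2 (by linarith [hq_pos m])
    simp only at h
    rw [div_lt_div_iff₀ h2q (hq_pos m)] at h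
    nlinarith [hq_pos m]
  have hτpos : ∀ m, 0 < τ m := by
    intro m; rw [hτ' m]
    have := key m
    nlinarith
  have hτle : ∀ m, τ m ≤ c * ω (q m) := by
    intro m; rw [hτ' m]
    have h1 : 0 < ω (2 * q m) := hωpos _ (by linarith [hq_pos m])
    nlinarith
  have hq0 : Tendsto q atTop (nhds 0) :=
    tendsto_pow_atTop_nhds_zero_of_lt_one (by norm_num) (by norm_num)
  have hqin : Tendsto q atTop (nhdsWithin 0 (Set.Ioi 0)) :=
    tendsto_nhdsWithin_iff.mpr ⟨hq0, Eventually.of_forall fun m => Set.mem_Ioi.mpr (hq_pos m)⟩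
  have haω : Tendsto (fun m => ω (q m)) atTop (nhds 0) := hω0.comp hqin
  have htend : Tendsto τ atTop (nhds 0) := by
    have h2 : Tendsto (fun m => c * ω (q m)) atTop (nhds (c * 0)) := haω.const_mul c
    rw [mul_zero] at h2
    exact squeeze_zero (fun m => (hτpos m).le) hτle h2
  refine ⟨htend, fun hnint hsum => ?_⟩
  -- notation
  set μf : ℝ → ℝ := fun s => ω s / s with hμfdef
  set a : ℕ → ℝ := fun m => ω (q m) with hadef
  have ha_pos : ∀ m, 0 < a m := fun m => hωpos _ (hq_pos m)
  set A : ℕ → ℝ := fun N => ∑ m ∈ Finset.range N, a m with hAdef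
  have hA_succ : ∀ N, A (N+1) = A N + a N := fun N => Finset.sum_range_succ a N
  -- bound on partial sums of a
  have hτsucc : ∀ m, τ (m+1) = c * a (m+1) - (c/2) * a m := by
    intro m
    rw [hτ' (m+1), hq_succ m]
    ring
  have hsum' : Summable (fun m => τ (m+1)) := (summable_nat_add_iff 1).mpr hsum
  set T : ℝ := ∑' m, τ (m+1) with hTdef
  have hpartial : ∀ N, ∑ m ∈ Finset.range N, τ (m+1) ≤ T :=
    fun N => Summable.sum_le_tsum _ (fun m _ => (hτpos (m+1)).le) hsum'
  have hsumid : ∀ N, ∑ m ∈ Finset.range N, τ (m+1) = c * (A (N+1) - a 0) - (c/2) * A N := by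
    intro N
    induction N with
    | zero => simp [hAdef, Finset.sum_range_one]
    | succ N ih =>
      rw [Finset.sum_range_succ, ih, hτsucc N, hA_succ (N+1), hA_succ N]
      ring
  have hAmono : ∀ N, A N ≤ A (N+1) := by
    intro N; rw [hA_succ N]; linarith [ha_pos N]
  set S : ℝ := 2 * (T + c * a 0) / c with hSdef
  have hAle : ∀ N, A N ≤ S := by
    intro N
    have h1 := hpartial N
    rw [hsumid N] at h1
    have h2 := hAmono N
    rw [hSdef, le_div_iff₀ hc]
    nlinarith
  -- integrability on pieces
  have hμf_pos : ∀ s > (0:ℝ), 0 < μf s := fun s hs => div_pos (hωpos s hs) hs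
  have hanti : AntitoneOn μf (Set.Ioi 0) := hμdec.antitoneOn
  have hIntOn : ∀ x : ℝ, 0 < x → ∀ y : ℝ, IntegrableOn μf (Set.Ioc x y) := by
    intro x hx y
    have hsub : Set.Ioc x y ⊆ Set.Ioi 0 := fun s hs => lt_trans hx hs.1
    refine Integrable.mono' (g := fun _ => μf x)
      (integrableOn_const measure_Ioc_lt_top.ne) ?_ ?_
    · exact (aemeasurable_restrict_of_antitoneOn measurableSet_Ioc
        (hanti.mono hsub)).aestronglyMeasurable
    · refine (ae_restrict_iff' measurableSet_Ioc).mpr (ae_of_all _ fun s hs => ?_)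
      rw [Real.norm_of_nonneg (hμf_pos s (lt_trans hx hs.1)).le]
      exact hanti (Set.mem_Ioi.mpr hx) (Set.mem_Ioi.mpr (lt_trans hx hs.1)) hs.1.le
  -- key integral bound
  have hq_le_one : ∀ m, q m ≤ 1 := by
    intro m
    simpa [hqdef] using pow_le_one₀ (by norm_num : (0:ℝ) ≤ 1/2) (by norm_num : (1/2:ℝ) ≤ 1)
  have hq_anti : ∀ m, q (m+1) ≤ q m := by
    intro m; have := hq_pos (m+1); linarith [hq_succ m]
  have hclaim : ∀ N, ∫ x in Set.Ioc (q N) 1, μf x ≤ A N := by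
    intro N
    induction N with
    | zero =>
      have : q 0 = 1 := by simp [hqdef]
      rw [this]
      simp [hAdef]
    | succ N ih =>
      have hsplit : Set.Ioc (q (N+1)) (q N) ∪ Set.Ioc (q N) 1 = Set.Ioc (q (N+1)) 1 :=
        Set.Ioc_union_Ioc_eq_Ioc (hq_anti N) (hq_le_one N)
      rw [← hsplit, setIntegral_union (Set.Ioc_disjoint_Ioc_of_le le_rfl) measurableSet_Ioc
        (hIntOn _ (hq_pos (N+1)) _) (hIntOn _ (hq_pos N) _)]
      have hpiece : ∫ x in Set.Ioc (q (N+1)) (q N), μf x ≤ a (N+1) := by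
        have hmon : ∫ x in Set.Ioc (q (N+1)) (q N), μf x ≤
            ∫ _ in Set.Ioc (q (N+1)) (q N), μf (q (N+1)) := by
          refine setIntegral_mono_on (hIntOn _ (hq_pos (N+1)) _)
            (integrableOn_const measure_Ioc_lt_top.ne) measurableSet_Ioc ?_
          intro s hs
          exact hanti (Set.mem_Ioi.mpr (hq_pos (N+1)))
            (Set.mem_Ioi.mpr (lt_trans (hq_pos (N+1)) hs.1)) hs.1.le
        rw [setIntegral_const, Real.volume_real_Ioc_of_le (hq_anti N), smul_eq_mul] at hmon
        have hlen : q N - q (N+1) = q (N+1) := by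
          have := hq_succ N; linarith
        rw [hlen] at hmon
        have : q (N+1) * μf (q (N+1)) = a (N+1) := by
          simp only [hμfdef, hadef]
          field_simp [(hq_pos (N+1)).ne']
        linarith [hmon, this.le]
      have haN : a (N+1) ≤ a N :=
        hmono (Set.mem_Ioi.mpr (hq_pos (N+1))) (Set.mem_Ioi.mpr (hq_pos N)) (hq_anti N)
      rw [hA_succ N]
      linarith
  -- conclude integrability
  apply hnint
  have : IntegrableOn μf (Set.Ioc (0:ℝ) 1) := by
    refine integrableOn_Ioc_of_intervalIntegral_norm_bounded_left (I := S) (a := q)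
      (l := atTop) (fun N => hIntOn _ (hq_pos N) 1) hq0 ?_
    refine Eventually.of_forall fun N => ?_
    have hcongr : ∫ x in Set.Ioc (q N) 1, ‖μf x‖ = ∫ x in Set.Ioc (q N) 1, μf x := by
      refine setIntegral_congr_fun measurableSet_Ioc fun s hs => ?_
      exact Real.norm_of_nonneg (hμf_pos s (lt_trans (hq_pos N) hs.1)).le
    rw [hcongr]
    exact le_trans (hclaim N) (hAle N)
  exact this
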